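/- For any tree T with n vertices and any star S with at least n + 1 leaves, gm(S □ T) ≥ ⌊√(2n)⌋. -/

import Mathlib

open SimpleGraph

/-- `G` is a minor of `H`: there is a model of `G` in `H`, i.e. a family of pairwise
disjoint branch sets, each inducing a connected subgraph of `H`, with an edge of `H`
between the branch sets of any two adjacent vertices of `G`. -/
def SimpleGraph.IsMinorOf {α : Type*} {β : Type*} (G : SimpleGraph α) (H : SimpleGraph β) :
    Prop :=
  ∃ B : α → Set β,
    (∀ x, (H.induce (B x)).Connected) ∧
    (Pairwise fun x y => Disjoint (B x) (B y)) ∧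
    (∀ ⦃x y⦄, G.Adj x y → ∃ a ∈ B x, ∃ b ∈ B y, H.Adj a b)

/-- The strong product of two simple graphs. -/
def strongProd {α β : Type*} (G : SimpleGraph α) (H : SimpleGraph β) :
    SimpleGraph (α × β) where
  Adj a b := (a.1 = b.1 ∧ H.Adj a.2 b.2) ∨ (a.2 = b.2 ∧ G.Adj a.1 b.1) ∨
             (G.Adj a.1 b.1 ∧ H.Adj a.2 b.2)
  symm := by
    refine ⟨?_⟩
    rintro a b (⟨h1, h2⟩ | ⟨h1, h2⟩ | ⟨h1, h2⟩)
    · exact Or.inl ⟨h1.symm, h2.symm⟩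
    · exact Or.inr (Or.inl ⟨h1.symm, h2.symm⟩)
    · exact Or.inr (Or.inr ⟨h1.symm, h2.symm⟩)
  loopless := by
    refine ⟨?_⟩
    rintro a (⟨_, h⟩ | ⟨_, h⟩ | ⟨h, _⟩)
    · exact H.loopless.irrefl _ h
    · exact G.loopless.irrefl _ h
    · exact G.loopless.irrefl _ h

/-- The lexicographic product of two simple graphs. -/
def lexProd {α β : Type*} (G : SimpleGraph α) (H : SimpleGraph β) :
    SimpleGraph (α × β) where
  Adj a b := G.Adj a.1 b.1 ∨ (a.1 = b.1 ∧ H.Adj a.2 b.2)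
  symm := by
    refine ⟨?_⟩
    rintro a b (h | ⟨h1, h2⟩)
    · exact Or.inl h.symm
    · exact Or.inr ⟨h1.symm, h2.symm⟩
  loopless := by
    refine ⟨?_⟩
    rintro a (h | ⟨_, h⟩)
    · exact G.loopless.irrefl _ h
    · exact H.loopless.irrefl _ h

/-- The `k × k` grid graph: vertices `{0,…,k-1}²`, two vertices adjacent iff they differ
by exactly one in exactly one coordinate. -/
def gridGraph (k : ℕ) : SimpleGraph (Fin k × Fin k) :=
  SimpleGraph.fromRel (fun a b =>
    (a.1 = b.1 ∧ a.2.val + 1 = b.2.val) ∨ (a.2 = b.2 ∧ a.1.val + 1 = b.1.val))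

/-- The star with `n` leaves: the root `none` is adjacent to each leaf `some i`. -/
def starGraph (n : ℕ) : SimpleGraph (Option (Fin n)) :=
  SimpleGraph.fromRel (fun a b => a = none ∧ b ≠ none)

/-- The subdivided star `S_{ℓ,p}`: a star with `ℓ` leaves, each edge subdivided `p-1`
times, i.e. a centre `none` with `ℓ` pendant paths `some (i, 0), …, some (i, p-1)`. -/
def subStar (ℓ p : ℕ) : SimpleGraph (Option (Fin ℓ × Fin p)) :=
  SimpleGraph.fromRel (fun a b =>
    (a = none ∧ ∃ (i : Fin ℓ) (j : Fin p), j.val = 0 ∧ b = some (i, j)) ∨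
    (∃ (i : Fin ℓ) (j k : Fin p), a = some (i, j) ∧ b = some (i, k) ∧ j.val + 1 = k.val))

/-- `G` admits a tree-decomposition of width at most `w`: there is a tree `T` (indexed by
`ℕ`) and bags such that every vertex and every edge of `G` lies in some bag, for every
vertex of `G` the set of nodes whose bag contains it induces a non-empty connected
subtree of `T`, and every bag has at most `w + 1` vertices. -/
def HasDecompWidth {V : Type*} (G : SimpleGraph V) (w : ℕ) : Prop :=
  ∃ (T : SimpleGraph ℕ) (bag : ℕ → Finset V),
    T.IsTree ∧
    (∀ v : V, ∃ i, v ∈ bag i) ∧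
    (∀ u v : V, G.Adj u v → ∃ i, u ∈ bag i ∧ v ∈ bag i) ∧
    (∀ v : V, (T.induce {i | v ∈ bag i}).Connected) ∧
    (∀ i, (bag i).card ≤ w + 1)

/-- The treewidth of a finite graph: the minimum width of a tree-decomposition. -/
noncomputable def treewidth {V : Type*} [Fintype V] (G : SimpleGraph V) : ℕ :=
  sInf { w | HasDecompWidth G w }

/-- `gm G`: the maximum `k` such that the `k × k` grid is a minor of `G`. -/
noncomputable def gridMinorNum {V : Type*} (G : SimpleGraph V) : ℕ :=
  sSup { k | (gridGraph k).IsMinorOf G }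

/-- A walk in a tree rooted at `r` is vertical if it contains at most one vertex of
each depth (distance from the root). -/
def IsVertical {V : Type*} (T : SimpleGraph V) (r : V) {u w : V} (p : T.Walk u w) : Prop :=
  ∀ x ∈ p.support, ∀ y ∈ p.support, T.dist r x = T.dist r y → x = y

/-- In the tree `T` rooted at `r`, `v` is an ancestor of `w`: `v` lies on the unique
path from `r` to `w` (in a tree this is equivalent to this distance identity). -/
def Ancestor {V : Type*} (T : SimpleGraph V) (r v w : V) : Prop :=
  T.dist r w = T.dist r v + T.dist v w

/-- Two vertices of a rooted tree are related if one is an ancestor of the other. -/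
def Related {V : Type*} (T : SimpleGraph V) (r v w : V) : Prop :=
  Ancestor T r v w ∨ Ancestor T r w v

/-- The height of `v` in the tree `T` rooted at `r`: the maximum order (number of
vertices) of a vertical path whose upper (minimum-depth) endpoint is `v`. -/
noncomputable def height {V : Type*} (T : SimpleGraph V) (r v : V) : ℕ :=
  sSup { n | ∃ (w : V) (p : T.Walk v w), p.IsPath ∧ IsVertical T r p ∧
      (∀ x ∈ p.support, T.dist r v ≤ T.dist r x) ∧ p.support.length = n }

/-- The radius of a finite graph: the least `e` such that some vertex is within
distance `e` of every vertex. -/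
noncomputable def graphRadius {V : Type*} [Fintype V] (T : SimpleGraph V) : ℕ :=
  sInf { e | ∃ v, ∀ w, T.dist v w ≤ e }

namespace Stmt16Aux

def cellIdx (k : ℕ) (c : Fin k × Fin k) : ℕ :=
  c.1.val * k + (if c.1.val % 2 = 0 then c.2.val else k - 1 - c.2.val)

lemma cellIdx_lt (k : ℕ) (c : Fin k × Fin k) : cellIdx k c < k * k := by
  obtain ⟨⟨x, hx⟩, ⟨y, hy⟩⟩ := c
  have hr : (if x % 2 = 0 then y else k - 1 - y) < k := by split <;> omega
  calc x * k + (if x % 2 = 0 then y else k - 1 - y) < x * k + k := by omega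
    _ = (x + 1) * k := by ring
    _ ≤ k * k := Nat.mul_le_mul_right k hx

lemma cellIdx_mod_two (k : ℕ) (c : Fin k × Fin k) :
    cellIdx k c % 2 = (c.1.val + c.2.val) % 2 := by
  obtain ⟨⟨x, hx⟩, ⟨y, hy⟩⟩ := c
  simp only [cellIdx]
  rcases Nat.even_or_odd x with ⟨a, ha⟩ | ⟨a, ha⟩
  · subst ha
    rw [if_pos (by omega)]
    rw [show (a + a) * k = 2 * (a * k) by ring]
    generalize a * k = A
    omega
  · subst ha
    rw [if_neg (by omega)]
    rw [show (2 * a + 1) * k = 2 * (a * k) + k by ring]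
    generalize a * k = A
    omega

lemma cellIdx_inj (k : ℕ) : Function.Injective (cellIdx k) := by
  rintro ⟨⟨x, hx⟩, ⟨y, hy⟩⟩ ⟨⟨x', hx'⟩, ⟨y', hy'⟩⟩ h
  simp only [cellIdx] at h
  have hr : (if x % 2 = 0 then y else k - 1 - y) < k := by split <;> omega
  have hr' : (if x' % 2 = 0 then y' else k - 1 - y') < k := by split <;> omega
  have hk : 0 < k := by omega
  have h1 : (x * k + (if x % 2 = 0 then y else k - 1 - y)) / k = x := by
    rw [mul_comm, Nat.mul_add_div hk, Nat.div_eq_of_lt hr, add_zero]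
  have h1' : (x' * k + (if x' % 2 = 0 then y' else k - 1 - y')) / k = x' := by
    rw [mul_comm, Nat.mul_add_div hk, Nat.div_eq_of_lt hr', add_zero]
  have hxx : x = x' := by rw [← h1, ← h1', h]
  subst hxx
  have h2 : (if x % 2 = 0 then y else k - 1 - y) = (if x % 2 = 0 then y' else k - 1 - y') := by
    omega
  have : y = y' := by
    by_cases hp : x % 2 = 0
    · rw [if_pos hp, if_pos hp] at h2; exact h2
    · rw [if_neg hp, if_neg hp] at h2; omega
  subst this
  rfl

lemma star_adj_none_some (m : ℕ) (i : Fin m) : (_root_.starGraph m).Adj none (some i) := by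
  rw [_root_.starGraph, fromRel_adj]
  exact ⟨by simp, Or.inl ⟨rfl, by simp⟩⟩

lemma induce_singleton_connected {V : Type*} (H : SimpleGraph V) (v : V) :
    (H.induce {v}).Connected := by
  rw [connected_iff]
  refine ⟨?_, ⟨⟨v, rfl⟩⟩⟩
  rintro ⟨a, ha⟩ ⟨b, hb⟩
  have : a = b := by
    simp only [Set.mem_singleton_iff] at ha hb; rw [ha, hb]
  subst this
  rfl

lemma induce_slice_connected {m n : ℕ} (T : SimpleGraph (Fin n)) (hT : T.Connected)
    (hn : 1 ≤ n) (ℓ : Fin m) :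
    (((_root_.starGraph m).boxProd T).induce {p : Option (Fin m) × Fin n | p.1 = some ℓ}).Connected := by
  rw [connected_iff]
  refine ⟨?_, ⟨⟨(some ℓ, ⟨0, hn⟩), rfl⟩⟩⟩
  rintro ⟨⟨a1, a2⟩, (ha : a1 = some ℓ)⟩ ⟨⟨b1, b2⟩, (hb : b1 = some ℓ)⟩
  subst ha hb
  let f : T →g ((_root_.starGraph m).boxProd T).induce {p : Option (Fin m) × Fin n | p.1 = some ℓ} :=
    ⟨fun v => ⟨(some ℓ, v), rfl⟩, fun {u v} h => by
      show ((_root_.starGraph m).boxProd T).Adj (some ℓ, u) (some ℓ, v)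
      exact Or.inr ⟨h, rfl⟩⟩
  exact (hT.preconnected a2 b2).map f

lemma grid_minor (n m k : ℕ) (T : SimpleGraph (Fin n)) (hT : T.Connected)
    (hn : 1 ≤ n) (hnm : n ≤ m) (hk : k * k ≤ 2 * n) :
    (gridGraph k).IsMinorOf ((_root_.starGraph m).boxProd T) := by
  have hv : ∀ c : Fin k × Fin k, cellIdx k c / 2 < n := fun c => by
    have h2 : cellIdx k c < 2 * n := lt_of_lt_of_le (cellIdx_lt k c) hk
    omega
  refine ⟨fun c => if (c.1.val + c.2.val) % 2 = 0
      then {(none, ⟨cellIdx k c / 2, hv c⟩)}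
      else {p | p.1 = some ⟨cellIdx k c / 2, lt_of_lt_of_le (hv c) hnm⟩}, ?_, ?_, ?_⟩
  · intro c
    dsimp only
    by_cases hc : (c.1.val + c.2.val) % 2 = 0
    · rw [if_pos hc]; exact induce_singleton_connected _ _
    · rw [if_neg hc]; exact induce_slice_connected T hT hn _
  · intro c d hcd
    dsimp only
    have hidx : cellIdx k c ≠ cellIdx k d := fun h => hcd (cellIdx_inj k h)
    have hpc := cellIdx_mod_two k c
    have hpd := cellIdx_mod_two k d
    by_cases hc : (c.1.val + c.2.val) % 2 = 0 <;>
      by_cases hd : (d.1.val + d.2.val) % 2 = 0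
    · rw [if_pos hc, if_pos hd]
      rw [Set.disjoint_singleton]
      intro h
      have : cellIdx k c / 2 = cellIdx k d / 2 := congrArg Fin.val (congrArg Prod.snd h)
      omega
    · rw [if_pos hc, if_neg hd]
      rw [Set.disjoint_left]
      rintro p rfl hp
      simp at hp
    · rw [if_neg hc, if_pos hd]
      rw [Set.disjoint_right]
      rintro p rfl hp
      simp at hp
    · rw [if_neg hc, if_neg hd]
      rw [Set.disjoint_left]
      rintro p hp hp'
      simp only [Set.mem_setOf_eq] at hp hp'
      rw [hp] at hp'
      have : cellIdx k c / 2 = cellIdx k d / 2 :=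
        congrArg Fin.val (Option.some_injective _ hp')
      omega
  · intro c d hadj
    rw [gridGraph, fromRel_adj] at hadj
    obtain ⟨hne, hrel⟩ := hadj
    have hsum : c.1.val + c.2.val + 1 = d.1.val + d.2.val ∨
        d.1.val + d.2.val + 1 = c.1.val + c.2.val := by
      rcases hrel with (⟨h1, h2⟩ | ⟨h1, h2⟩) | (⟨h1, h2⟩ | ⟨h1, h2⟩)
      · left; rw [h1]; omega
      · left; rw [h1]; omega
      · right; rw [h1]; omega
      · right; rw [h1]; omega
    dsimp only
    by_cases hc : (c.1.val + c.2.val) % 2 = 0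
    · have hd : ¬ (d.1.val + d.2.val) % 2 = 0 := by omega
      refine ⟨(none, ⟨cellIdx k c / 2, hv c⟩), ?_,
        (some ⟨cellIdx k d / 2, lt_of_lt_of_le (hv d) hnm⟩, ⟨cellIdx k c / 2, hv c⟩), ?_, ?_⟩
      · rw [if_pos hc]; rfl
      · rw [if_neg hd]; rfl
      · exact Or.inl ⟨star_adj_none_some m _, rfl⟩
    · have hd : (d.1.val + d.2.val) % 2 = 0 := by omega
      refine ⟨(some ⟨cellIdx k c / 2, lt_of_lt_of_le (hv c) hnm⟩, ⟨cellIdx k d / 2, hv d⟩), ?_,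
        (none, ⟨cellIdx k d / 2, hv d⟩), ?_, ?_⟩
      · rw [if_neg hc]; rfl
      · rw [if_pos hd]; rfl
      · exact Or.inl ⟨(star_adj_none_some m _).symm, rfl⟩

lemma minor_card_le {V : Type*} [Fintype V] {j : ℕ} {H : SimpleGraph V}
    (h : (gridGraph j).IsMinorOf H) : j ≤ Fintype.card V := by
  obtain ⟨B, hconn, hdisj, -⟩ := h
  rcases Nat.eq_zero_or_pos j with rfl | hj
  · exact Nat.zero_le _
  have hne : ∀ c : Fin j × Fin j, ∃ p, p ∈ B c := fun c => by
    obtain ⟨⟨p, hp⟩⟩ := (hconn c).nonempty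
    exact ⟨p, hp⟩
  choose rep hrep using hne
  have hinj : Function.Injective rep := by
    intro c d h
    by_contra hne'
    exact Set.disjoint_left.mp (hdisj hne') (hrep c) (h ▸ hrep d)
  have hcard := Fintype.card_le_of_injective rep hinj
  simp only [Fintype.card_prod, Fintype.card_fin] at hcard
  calc j ≤ j * j := Nat.le_mul_of_pos_left j hj
    _ ≤ Fintype.card V := hcard

end Stmt16Aux

/-- For any tree `T` with `n` vertices and any star `S` with at least `n + 1` leaves,
`gm(S □ T) ≥ ⌊√(2n)⌋`. -/
theorem stmt16 (n m : ℕ) (T : SimpleGraph (Fin n)) (hT : T.IsTree) (hm : n + 1 ≤ m) :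
    Nat.sqrt (2 * n) ≤ gridMinorNum ((_root_.starGraph m).boxProd T) := by
  have hn : 1 ≤ n := Fin.pos_iff_nonempty.mpr hT.isConnected.nonempty
  have hmem : (gridGraph (Nat.sqrt (2 * n))).IsMinorOf ((_root_.starGraph m).boxProd T) :=
    Stmt16Aux.grid_minor n m _ T hT.isConnected hn (by omega) (Nat.sqrt_le (2 * n))
  have hbdd : BddAbove {j | (gridGraph j).IsMinorOf ((_root_.starGraph m).boxProd T)} :=
    ⟨Fintype.card (Option (Fin m) × Fin n), fun j hj => Stmt16Aux.minor_card_le hj⟩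
  exact le_csSup hbdd hmem
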